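/- Lagrange-d'Alembert-Pontryagin principle (stationarity direction): let L : ℝ^n × ℝ^n → ℝ be continuously differentiable, let Δ : ℝ^n → Submodule(ℝ, ℝ^n) assign a linear subspace of ℝ^n to each point, and let q, v, p : [t₁,t₂] → ℝ^n be continuously differentiable curves (t₁ < t₂) satisfying, for all t: p(t) = ∂L/∂v(q(t),v(t)); q'(t) = v(t); v(t) ∈ Δ(q(t)); and (p'(t) − ∂L/∂q(q(t),v(t)))·u = 0 for all u ∈ Δ(q(t)). Then for every continuously differentiable variation (δq,δv,δp) : [t₁,t₂] → ℝ^n × ℝ^n × ℝ^n with δq(t₁) = δq(t₂) = 0 and δq(t) ∈ Δ(q(t)) for all t, the function s ↦ ∫_{t₁}^{t₂} [ L(q(t)+s δq(t), v(t)+s δv(t)) + (p(t)+s δp(t))·(q'(t)+s δq'(t) − v(t) − s δv(t)) ] dt has derivative zero at s = 0. -/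

import Mathlib

open scoped BigOperators

/-- The dot product on `ℝ^k`. -/
def dot {k : ℕ} (x y : Fin k → ℝ) : ℝ := ∑ i, x i * y i

lemma dot_zero_right {k : ℕ} (x : Fin k → ℝ) : dot x 0 = 0 := by simp [dot]

lemma dot_single {k : ℕ} (a : Fin k → ℝ) (i : Fin k) : dot a (Pi.single i 1) = a i := by
  simp [dot, Pi.single_apply]

lemma dot_sub_left {k : ℕ} (x y z : Fin k → ℝ) : dot (x - y) z = dot x z - dot y z := by
  simp [dot, sub_mul, Finset.sum_sub_distrib]

lemma dot_sub_right {k : ℕ} (x y z : Fin k → ℝ) : dot x (y - z) = dot x y - dot x z := by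
  simp [dot, mul_sub, Finset.sum_sub_distrib]

lemma Continuous.dot' {k : ℕ} {α : Type*} [TopologicalSpace α] {f g : α → Fin k → ℝ}
    (hf : Continuous f) (hg : Continuous g) : Continuous fun x => dot (f x) (g x) := by
  unfold dot
  exact continuous_finset_sum _ fun i _ =>
    ((continuous_apply i).comp hf).mul ((continuous_apply i).comp hg)

lemma hasDerivAt_dot {k : ℕ} {f g : ℝ → Fin k → ℝ} {f' g' : Fin k → ℝ} {s : ℝ}
    (hf : ∀ i, HasDerivAt (fun x => f x i) (f' i) s)
    (hg : ∀ i, HasDerivAt (fun x => g x i) (g' i) s) :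
    HasDerivAt (fun x => dot (f x) (g x)) (dot f' (g s) + dot (f s) g') s := by
  have h : HasDerivAt (fun x => ∑ i, f x i * g x i)
      (∑ i, (f' i * g s i + f s i * g' i)) s :=
    HasDerivAt.fun_sum fun i _ => (hf i).mul (hg i)
  have he : dot f' (g s) + dot (f s) g' = ∑ i, (f' i * g s i + f s i * g' i) := by
    simp [dot, Finset.sum_add_distrib]
  rw [he]; exact h

lemma hasDerivAt_affine_comp {k : ℕ} (a b : Fin k → ℝ) (s : ℝ) (i : Fin k) :
    HasDerivAt (fun s : ℝ => (a + s • b) i) (b i) s := by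
  simp only [Pi.add_apply, Pi.smul_apply, smul_eq_mul]
  simpa using ((hasDerivAt_id s).mul_const (b i)).const_add (a i)

lemma hasDerivAt_affine2_comp {k : ℕ} (a b c d : Fin k → ℝ) (s : ℝ) (i : Fin k) :
    HasDerivAt (fun s : ℝ => (a + s • b - c - s • d) i) ((b - d) i) s := by
  simp only [Pi.sub_apply, Pi.add_apply, Pi.smul_apply, smul_eq_mul]
  simpa using ((((hasDerivAt_id s).mul_const (b i)).const_add (a i)).sub_const
    (c i)).fun_sub ((hasDerivAt_id s).mul_const (d i))

/-- Lagrange-d'Alembert-Pontryagin principle (stationarity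
direction).  If the `C¹` curves `(q,v,p)` satisfy the implicit
Lagrange-d'Alembert equations on `[t₁,t₂]` for a `C¹` Lagrangian `L` (with
partial gradients `Lq, Lv`) and a distribution `Δ`, then the
Lagrange-d'Alembert-Pontryagin action is stationary at `s = 0` for every `C¹`
variation `(δq,δv,δp)` with `δq(t₁) = δq(t₂) = 0` and `δq(t) ∈ Δ(q(t))`. -/
theorem lagrange_dAlembert_pontryagin_stationarity {n : ℕ}
    (L : (Fin n → ℝ) × (Fin n → ℝ) → ℝ)
    (Lq Lv : (Fin n → ℝ) × (Fin n → ℝ) → Fin n → ℝ)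
    (hL : ContDiff ℝ 1 L)
    (hG : ∀ x : (Fin n → ℝ) × (Fin n → ℝ),
      ∃ f : ((Fin n → ℝ) × (Fin n → ℝ)) →L[ℝ] ℝ,
        HasFDerivAt L f x ∧
        ∀ y : (Fin n → ℝ) × (Fin n → ℝ), f y = dot (Lq x) y.1 + dot (Lv x) y.2)
    (Δ : (Fin n → ℝ) → Submodule ℝ (Fin n → ℝ))
    (t₁ t₂ : ℝ) (ht : t₁ < t₂)
    (q v p : ℝ → Fin n → ℝ)
    (hq : ContDiff ℝ 1 q) (hv : ContDiff ℝ 1 v) (hp : ContDiff ℝ 1 p)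
    (h1 : ∀ t ∈ Set.Icc t₁ t₂, p t = Lv (q t, v t))
    (h2 : ∀ t ∈ Set.Icc t₁ t₂, deriv q t = v t)
    (h3 : ∀ t ∈ Set.Icc t₁ t₂, v t ∈ Δ (q t))
    (h4 : ∀ t ∈ Set.Icc t₁ t₂, ∀ u ∈ Δ (q t),
      dot (deriv p t - Lq (q t, v t)) u = 0)
    (δq δv δp : ℝ → Fin n → ℝ)
    (hδq : ContDiff ℝ 1 δq) (hδv : ContDiff ℝ 1 δv) (hδp : ContDiff ℝ 1 δp)
    (hb1 : δq t₁ = 0) (hb2 : δq t₂ = 0)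
    (hδΔ : ∀ t ∈ Set.Icc t₁ t₂, δq t ∈ Δ (q t)) :
    HasDerivAt (fun s : ℝ => ∫ t in t₁..t₂,
      (L (q t + s • δq t, v t + s • δv t) +
        dot (p t + s • δp t)
          (deriv q t + s • deriv δq t - v t - s • δv t)))
      0 0 := by
  classical
  set F' : ℝ → ℝ → ℝ := fun s t =>
    (dot (Lq (q t + s • δq t, v t + s • δv t)) (δq t)
      + dot (Lv (q t + s • δq t, v t + s • δv t)) (δv t))
    + (dot (δp t) (deriv q t + s • deriv δq t - v t - s • δv t)
      + dot (p t + s • δp t) (deriv δq t - δv t)) with hF'def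
  -- basic continuity facts
  have cdq : Continuous (deriv q) := hq.continuous_deriv le_rfl
  have cdδq : Continuous (deriv δq) := hδq.continuous_deriv le_rfl
  have cdp : Continuous (deriv p) := hp.continuous_deriv le_rfl
  -- Lq and Lv expressed through the Fréchet derivative, hence continuous
  have hLq_eq : ∀ x i, Lq x i = fderiv ℝ L x ((Pi.single i 1 : Fin n → ℝ), 0) := by
    intro x i
    obtain ⟨f, hf, hrepr⟩ := hG x
    rw [hf.fderiv, hrepr]
    simp [dot_single, dot_zero_right]
  have hLv_eq : ∀ x i, Lv x i = fderiv ℝ L x ((0 : Fin n → ℝ), Pi.single i 1) := by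
    intro x i
    obtain ⟨f, hf, hrepr⟩ := hG x
    rw [hf.fderiv, hrepr]
    simp [dot_single, dot_zero_right]
  have hfd_cont : Continuous (fderiv ℝ L) := hL.continuous_fderiv one_ne_zero
  have hLq_cont : Continuous Lq := by
    refine continuous_pi fun i => ?_
    have : (fun x => Lq x i)
        = fun x => fderiv ℝ L x ((Pi.single i 1 : Fin n → ℝ), 0) :=
      funext fun x => hLq_eq x i
    rw [this]
    exact (ContinuousLinearMap.apply ℝ ℝ
      ((Pi.single i 1 : Fin n → ℝ), (0 : Fin n → ℝ))).continuous.comp hfd_cont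
  have hLv_cont : Continuous Lv := by
    refine continuous_pi fun i => ?_
    have : (fun x => Lv x i)
        = fun x => fderiv ℝ L x ((0 : Fin n → ℝ), Pi.single i 1) :=
      funext fun x => hLv_eq x i
    rw [this]
    exact (ContinuousLinearMap.apply ℝ ℝ
      ((0 : Fin n → ℝ), (Pi.single i 1 : Fin n → ℝ))).continuous.comp hfd_cont
  -- continuity of F' as a function of (s,t)
  have cA : Continuous fun z : ℝ × ℝ => q z.2 + z.1 • δq z.2 :=
    (hq.continuous.comp continuous_snd).add
      (continuous_fst.smul (hδq.continuous.comp continuous_snd))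
  have cB : Continuous fun z : ℝ × ℝ => v z.2 + z.1 • δv z.2 :=
    (hv.continuous.comp continuous_snd).add
      (continuous_fst.smul (hδv.continuous.comp continuous_snd))
  have cx : Continuous fun z : ℝ × ℝ => (q z.2 + z.1 • δq z.2, v z.2 + z.1 • δv z.2) :=
    cA.prodMk cB
  have cW : Continuous fun z : ℝ × ℝ =>
      deriv q z.2 + z.1 • deriv δq z.2 - v z.2 - z.1 • δv z.2 :=
    (((cdq.comp continuous_snd).add
      (continuous_fst.smul (cdδq.comp continuous_snd))).sub
      (hv.continuous.comp continuous_snd)).sub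
      (continuous_fst.smul (hδv.continuous.comp continuous_snd))
  have cP : Continuous fun z : ℝ × ℝ => p z.2 + z.1 • δp z.2 :=
    (hp.continuous.comp continuous_snd).add
      (continuous_fst.smul (hδp.continuous.comp continuous_snd))
  have cG : Continuous fun z : ℝ × ℝ => F' z.1 z.2 := by
    rw [hF'def]
    exact (((hLq_cont.comp cx).dot' (hδq.continuous.comp continuous_snd)).add
      ((hLv_cont.comp cx).dot' (hδv.continuous.comp continuous_snd))).add
      (((hδp.continuous.comp continuous_snd).dot' cW).add
        (cP.dot' ((cdδq.comp continuous_snd).sub (hδv.continuous.comp continuous_snd))))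
  -- bound on the compact set [-1,1] × [t₁,t₂]
  obtain ⟨C, hC⟩ :=
    ((isCompact_Icc (a := (-1:ℝ)) (b := 1)).prod
      (isCompact_Icc (a := t₁) (b := t₂))).exists_bound_of_continuousOn
      (cG.continuousOn)
  -- differentiability in s of the integrand
  have key : ∀ (t s : ℝ),
      HasDerivAt (fun s => L (q t + s • δq t, v t + s • δv t) +
        dot (p t + s • δp t) (deriv q t + s • deriv δq t - v t - s • δv t))
        (F' s t) s := by
    intro t s
    obtain ⟨f, hf, hrepr⟩ := hG (q t + s • δq t, v t + s • δv t)
    have hcurve : HasDerivAt (fun s : ℝ => (q t + s • δq t, v t + s • δv t))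
        ((δq t, δv t) : (Fin n → ℝ) × (Fin n → ℝ)) s := by
      have ha : HasDerivAt (fun s : ℝ => q t + s • δq t) (δq t) s := by
        simpa using ((hasDerivAt_id s).smul_const (δq t)).const_add (q t)
      have hb : HasDerivAt (fun s : ℝ => v t + s • δv t) (δv t) s := by
        simpa using ((hasDerivAt_id s).smul_const (δv t)).const_add (v t)
      exact ha.prodMk hb
    have hLpart : HasDerivAt (fun s => L (q t + s • δq t, v t + s • δv t))
        (dot (Lq (q t + s • δq t, v t + s • δv t)) (δq t)
          + dot (Lv (q t + s • δq t, v t + s • δv t)) (δv t)) s := by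
      have := hf.comp_hasDerivAt s hcurve
      rw [hrepr] at this
      simpa [Function.comp_def] using this
    have hdot : HasDerivAt
        (fun s => dot (p t + s • δp t)
          (deriv q t + s • deriv δq t - v t - s • δv t))
        (dot (δp t) (deriv q t + s • deriv δq t - v t - s • δv t)
          + dot (p t + s • δp t) (deriv δq t - δv t)) s :=
      hasDerivAt_dot (fun i => hasDerivAt_affine_comp (p t) (δp t) s i)
        (fun i => hasDerivAt_affine2_comp (deriv q t) (deriv δq t) (v t) (δv t) s i)
    exact hLpart.add hdot
  -- continuity in t for fixed s
  have contF : ∀ s : ℝ, Continuous fun t =>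
      L (q t + s • δq t, v t + s • δv t) +
        dot (p t + s • δp t) (deriv q t + s • deriv δq t - v t - s • δv t) := by
    intro s
    have c1 : Continuous fun t => (q t + s • δq t, v t + s • δv t) :=
      ((hq.continuous.add (hδq.continuous.const_smul s))).prodMk
        (hv.continuous.add (hδv.continuous.const_smul s))
    exact (hL.continuous.comp c1).add
      (((hp.continuous.add (hδp.continuous.const_smul s))).dot'
        (((cdq.add (cdδq.const_smul s)).sub hv.continuous).sub
          (hδv.continuous.const_smul s)))
  have contF'0 : Continuous fun t => F' 0 t :=
    cG.comp (Continuous.prodMk continuous_const continuous_id)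
  -- apply differentiation under the integral sign
  have main := (intervalIntegral.hasDerivAt_integral_of_dominated_loc_of_deriv_le
      (μ := MeasureTheory.volume) (F := fun s t =>
        L (q t + s • δq t, v t + s • δv t) +
          dot (p t + s • δp t) (deriv q t + s • deriv δq t - v t - s • δv t))
      (F' := fun s t => F' s t) (x₀ := (0:ℝ)) (a := t₁) (b := t₂)
      (bound := fun _ => C) (s := Metric.ball (0:ℝ) 1) (Metric.ball_mem_nhds (0:ℝ) one_pos)
      (Filter.Eventually.of_forall fun s =>
        ((contF s).aestronglyMeasurable).restrict)
      ((contF 0).intervalIntegrable t₁ t₂)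
      ((contF'0.aestronglyMeasurable).restrict)
      ?_
      (intervalIntegrable_const)
      (Filter.Eventually.of_forall fun t _ s _ => key t s)).2
  · -- conclude: the integral of F' 0 vanishes
    have huIcc : Set.uIcc t₁ t₂ = Set.Icc t₁ t₂ := Set.uIcc_of_le ht.le
    have hzero : (∫ t in t₁..t₂, F' 0 t) = 0 := by
      have hH : ∀ t : ℝ, HasDerivAt (fun t => dot (p t) (δq t))
          (dot (deriv p t) (δq t) + dot (p t) (deriv δq t)) t := by
        intro t
        exact hasDerivAt_dot
          (fun i => hasDerivAt_pi.mp ((hp.differentiable one_ne_zero t).hasDerivAt) i)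
          (fun i => hasDerivAt_pi.mp ((hδq.differentiable one_ne_zero t).hasDerivAt) i)
      have hEq : Set.EqOn (fun t => F' 0 t)
          (fun t => dot (deriv p t) (δq t) + dot (p t) (deriv δq t))
          (Set.uIcc t₁ t₂) := by
        rw [huIcc]
        intro t htI
        have e1 := h1 t htI
        have e2 := h2 t htI
        have e4 := h4 t htI (δq t) (hδΔ t htI)
        rw [dot_sub_left] at e4
        simp only [hF'def, zero_smul, add_zero, sub_zero]
        rw [e2, sub_self, dot_zero_right, ← e1, dot_sub_right]
        linarith [e4]
      have hint : IntervalIntegrable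
          (fun t => dot (deriv p t) (δq t) + dot (p t) (deriv δq t))
          MeasureTheory.volume t₁ t₂ :=
        ((cdp.dot' hδq.continuous).add (hp.continuous.dot' cdδq)).intervalIntegrable t₁ t₂
      calc (∫ t in t₁..t₂, F' 0 t)
          = ∫ t in t₁..t₂, (dot (deriv p t) (δq t) + dot (p t) (deriv δq t)) :=
            intervalIntegral.integral_congr hEq
        _ = dot (p t₂) (δq t₂) - dot (p t₁) (δq t₁) :=
            intervalIntegral.integral_eq_sub_of_hasDerivAt (fun t _ => hH t) hint
        _ = 0 := by rw [hb1, hb2, dot_zero_right, dot_zero_right, sub_zero]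
    rw [hzero] at main
    exact main
  · -- the uniform bound
    refine Filter.Eventually.of_forall fun t htI s hs => ?_
    have hsI : s ∈ Set.Icc (-1:ℝ) 1 := by
      rw [Metric.mem_ball, Real.dist_eq, sub_zero] at hs
      constructor <;> [linarith [abs_lt.mp hs |>.1]; linarith [abs_lt.mp hs |>.2]]
    have htI' : t ∈ Set.Icc t₁ t₂ := by
      rw [Set.uIoc_of_le ht.le] at htI
      exact Set.Ioc_subset_Icc_self htI
    exact hC (s, t) ⟨hsI, htI'⟩
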